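/- Let A > 0, α, β > 0, ε = ±1, and let f, g : J → ℝ be differentiable functions on an interval J with A − α²f(u)² > 0 and f'(u)/√(A − α²f(u)²) = ε·g'(u)/√(A + β²g(u)²) for all u ∈ J. Then there exists a constant C ∈ ℝ such that arcsin(α f(u)/√A) = ε·(α/β)·ln(β g(u) + √(β²g(u)² + A)) + C for all u ∈ J. -/

import Mathlib

theorem moore_meridian_integration
    (A α β ε : ℝ) (hA : 0 < A) (hα : 0 < α) (hβ : 0 < β)
    (hε : ε = 1 ∨ ε = -1)
    (J : Set ℝ) (hJopen : IsOpen J) (hJconn : J.OrdConnected)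
    (f g : ℝ → ℝ)
    (hf : ∀ u ∈ J, DifferentiableAt ℝ f u)
    (hg : ∀ u ∈ J, DifferentiableAt ℝ g u)
    (hA' : ∀ u ∈ J, 0 < A - α ^ 2 * f u ^ 2)
    (hode : ∀ u ∈ J,
      deriv f u / Real.sqrt (A - α ^ 2 * f u ^ 2) =
        ε * (deriv g u / Real.sqrt (A + β ^ 2 * g u ^ 2))) :
    ∃ C : ℝ, ∀ u ∈ J,
      Real.arcsin (α * f u / Real.sqrt A) =
        ε * (α / β) * Real.log (β * g u + Real.sqrt (β ^ 2 * g u ^ 2 + A)) + C := by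
  set F : ℝ → ℝ := fun u =>
    Real.arcsin (α * f u / Real.sqrt A) -
      ε * (α / β) * Real.log (β * g u + Real.sqrt (β ^ 2 * g u ^ 2 + A)) with hF
  have key : ∀ u ∈ J, HasDerivAt F 0 u := by
    intro u hu
    have hS : 0 < A - α ^ 2 * f u ^ 2 := hA' u hu
    have hSpos : 0 < Real.sqrt (A - α ^ 2 * f u ^ 2) := Real.sqrt_pos.mpr hS
    have hApos : 0 < Real.sqrt A := Real.sqrt_pos.mpr hA
    have hTq : 0 < β ^ 2 * g u ^ 2 + A := by positivity
    have hTpos : 0 < Real.sqrt (β ^ 2 * g u ^ 2 + A) := Real.sqrt_pos.mpr hTq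
    set S := Real.sqrt (A - α ^ 2 * f u ^ 2) with hSdef
    set T := Real.sqrt (β ^ 2 * g u ^ 2 + A) with hTdef
    -- w > 0
    have habs : |β * g u| < T := by
      rw [← Real.sqrt_sq_eq_abs]
      apply Real.sqrt_lt_sqrt (by positivity)
      nlinarith
    have hw : 0 < β * g u + T := by
      have := neg_abs_le (β * g u)
      linarith
    -- arcsin part
    have hx2 : (α * f u / Real.sqrt A) ^ 2 < 1 := by
      rw [div_pow, div_lt_one (by positivity)]
      rw [Real.sq_sqrt hA.le]
      nlinarith
    have hxabs : |α * f u / Real.sqrt A| < 1 := by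
      rwa [← sq_lt_one_iff_abs_lt_one]
    have hxlt := abs_lt.mp hxabs
    have h1 : HasDerivAt (fun u => α * f u / Real.sqrt A)
        (α * deriv f u / Real.sqrt A) u :=
      (((hf u hu).hasDerivAt.const_mul α).div_const _)
    have harc : HasDerivAt (fun u => Real.arcsin (α * f u / Real.sqrt A))
        ((1 / Real.sqrt (1 - (α * f u / Real.sqrt A) ^ 2)) * (α * deriv f u / Real.sqrt A)) u :=
      by have := (Real.hasDerivAt_arcsin hxlt.1.ne' hxlt.2.ne).comp u h1; exact this
    have hsq1 : Real.sqrt (1 - (α * f u / Real.sqrt A) ^ 2) = S / Real.sqrt A := by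
      rw [hSdef, eq_div_iff (ne_of_gt hApos), ← Real.sqrt_mul (by nlinarith) A]
      congr 1
      rw [div_pow, Real.sq_sqrt hA.le]
      field_simp
    have harc' : HasDerivAt (fun u => Real.arcsin (α * f u / Real.sqrt A))
        (α * deriv f u / S) u := by
      convert harc using 1
      rw [hsq1]
      field_simp
    -- log part
    have h2 : HasDerivAt (fun u => β ^ 2 * g u ^ 2 + A)
        (β ^ 2 * (2 * g u * deriv g u)) u := by
      have := (((hg u hu).hasDerivAt.pow 2).const_mul (β ^ 2)).add_const A
      simpa [pow_one, mul_comm, mul_assoc, mul_left_comm] using this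
    have hsqrt : HasDerivAt (fun u => Real.sqrt (β ^ 2 * g u ^ 2 + A))
        ((1 / (2 * T)) * (β ^ 2 * (2 * g u * deriv g u))) u :=
      (Real.hasDerivAt_sqrt (ne_of_gt hTq)).comp u h2
    have hwd : HasDerivAt (fun u => β * g u + Real.sqrt (β ^ 2 * g u ^ 2 + A))
        (β * deriv g u + (1 / (2 * T)) * (β ^ 2 * (2 * g u * deriv g u))) u :=
      ((hg u hu).hasDerivAt.const_mul β).add hsqrt
    have hlog : HasDerivAt (fun u =>
        ε * (α / β) * Real.log (β * g u + Real.sqrt (β ^ 2 * g u ^ 2 + A)))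
        (ε * (α / β) * ((β * deriv g u + (1 / (2 * T)) * (β ^ 2 * (2 * g u * deriv g u))) /
          (β * g u + T))) u := by
      exact (hwd.log (ne_of_gt hw)).const_mul _
    -- simplify log derivative
    have hlogderiv : ε * (α / β) * ((β * deriv g u + (1 / (2 * T)) * (β ^ 2 * (2 * g u * deriv g u))) /
          (β * g u + T)) = ε * α * deriv g u / T := by
      have hT2 : T ^ 2 = β ^ 2 * g u ^ 2 + A := Real.sq_sqrt hTq.le
      field_simp
      ring
    -- ODE
    have hodeu := hode u hu
    have hac : Real.sqrt (A + β ^ 2 * g u ^ 2) = T := by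
      rw [hTdef, add_comm]
    rw [hac] at hodeu
    have hderiv_eq : α * deriv f u / S = ε * α * deriv g u / T := by
      rw [show α * deriv f u / S = α * (deriv f u / S) by ring, hodeu]
      ring
    have : HasDerivAt F (α * deriv f u / S - ε * α * deriv g u / T) u := by
      rw [hF]
      exact harc'.sub (hlogderiv ▸ hlog)
    simpa [hderiv_eq] using this
  rcases J.eq_empty_or_nonempty with hJe | ⟨u0, hu0⟩
  · exact ⟨0, fun u hu => absurd hu (by simp [hJe])⟩
  · refine ⟨F u0, fun u hu => ?_⟩
    have hconv : Convex ℝ J := convex_iff_ordConnected.mpr hJconn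
    have hdiff : DifferentiableOn ℝ F J := fun x hx => ((key x hx).differentiableAt).differentiableWithinAt
    have hzero : ∀ x ∈ J, fderivWithin ℝ F J x = 0 := by
      intro x hx
      rw [fderivWithin_of_isOpen hJopen hx, ((key x hx).hasFDerivAt).fderiv]
      ext y
      simp
    have := hconv.is_const_of_fderivWithin_eq_zero hdiff hzero hu hu0
    rw [hF] at this
    simp only at this
    linarith
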